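/- For every integer r ≥ 12, the numerical semigroup S_r generated by {r, r+1, ..., 2r−8, 2r−7} ∪ {2r−4, 2r−3} has gap set exactly {1, ..., r−1} ∪ {2r−6, 2r−5, 2r−2, 2r−1}; in particular S_r has genus r + 3 and Frobenius number 2r − 1. -/

import Mathlib

/-- For r ≥ 12, the numerical semigroup generated by {r, r+1, ..., 2r−7} ∪ {2r−4, 2r−3}
has gap set {1,...,r−1} ∪ {2r−6, 2r−5, 2r−2, 2r−1}; in particular its genus is r+3
and its Frobenius number is 2r−1. -/
theorem stmt4 (r : ℕ) (hr : 12 ≤ r) (S : AddSubmonoid ℕ)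
    (hS : S = AddSubmonoid.closure
      ((Set.Icc r (2 * r - 7) ∪ {2 * r - 4, 2 * r - 3}) : Set ℕ)) :
    {n : ℕ | n ∉ S} =
      Set.Icc 1 (r - 1) ∪ ({2 * r - 6, 2 * r - 5, 2 * r - 2, 2 * r - 1} : Set ℕ) ∧
    {n : ℕ | n ∉ S}.ncard = r + 3 ∧
    (2 * r - 1) ∉ S ∧ (∀ n : ℕ, 2 * r - 1 < n → n ∈ S) := by
  subst hS
  set G : Set ℕ := (Set.Icc r (2 * r - 7) ∪ {2 * r - 4, 2 * r - 3}) with hGdef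
  have hGmem : ∀ x : ℕ, x ∈ G ↔ (r ≤ x ∧ x ≤ 2*r-7) ∨ x = 2*r-4 ∨ x = 2*r-3 := by
    intro x; simp [hGdef, Set.mem_Icc]; tauto
  have hmem : ∀ x, r ≤ x → x ≤ 2*r-7 → x ∈ AddSubmonoid.closure G := by
    intro x h1 h2
    exact AddSubmonoid.subset_closure ((hGmem x).2 (Or.inl ⟨h1, h2⟩))
  have hmem4 : (2*r-4 : ℕ) ∈ AddSubmonoid.closure G :=
    AddSubmonoid.subset_closure ((hGmem _).2 (Or.inr (Or.inl rfl)))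
  have hup : ∀ n, 2*r ≤ n → n ∈ AddSubmonoid.closure G := by
    intro n
    induction n using Nat.strong_induction_on with
    | _ n ih =>
      intro hn
      by_cases h1 : n ≤ 3*r-7
      · have hne : n = r + (n - r) := by omega
        rw [hne]
        exact add_mem (hmem r le_rfl (by omega)) (hmem (n-r) (by omega) (by omega))
      · by_cases h2 : n ≤ 4*r-14
        · have hne : n = (2*r-7) + (n - (2*r-7)) := by omega
          rw [hne]
          exact add_mem (hmem _ (by omega) le_rfl) (hmem _ (by omega) (by omega))
        · by_cases h3 : n ≤ 4*r-11
          · have hne : n = (2*r-4) + (n - (2*r-4)) := by omega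
            rw [hne]
            exact add_mem hmem4 (hmem _ (by omega) (by omega))
          · have hne : n = r + (n - r) := by omega
            rw [hne]
            exact add_mem (hmem r le_rfl (by omega)) (ih (n-r) (by omega) (by omega))
  have hlow : ∀ n ∈ AddSubmonoid.closure G, n = 0 ∨ n ∈ G ∨ 2*r ≤ n := by
    intro n hn
    induction hn using AddSubmonoid.closure_induction with
    | mem x hx => exact Or.inr (Or.inl hx)
    | zero => exact Or.inl rfl
    | add x y hx hy ihx ihy =>
      have hg : ∀ z ∈ G, r ≤ z := by
        intro z hz
        rcases (hGmem z).1 hz with ⟨h, _⟩ | h | h <;> omega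
      rcases ihx with rfl | h | h
      · simpa using ihy
      · rcases ihy with rfl | h' | h'
        · simpa using Or.inr (Or.inl h)
        · exact Or.inr (Or.inr (by have := hg x h; have := hg y h'; omega))
        · exact Or.inr (Or.inr (by omega))
      · exact Or.inr (Or.inr (by omega))
  have hchar : ∀ n, n ∈ AddSubmonoid.closure G ↔ (n = 0 ∨ n ∈ G ∨ 2*r ≤ n) := by
    intro n
    constructor
    · exact hlow n
    · rintro (rfl | h | h)
      · exact zero_mem _
      · exact AddSubmonoid.subset_closure h
      · exact hup n h
  have hgaps : {n : ℕ | n ∉ AddSubmonoid.closure G} =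
      Set.Icc 1 (r - 1) ∪ ({2 * r - 6, 2 * r - 5, 2 * r - 2, 2 * r - 1} : Set ℕ) := by
    ext n
    simp only [Set.mem_setOf_eq, hchar, hGmem, Set.mem_union, Set.mem_Icc,
      Set.mem_insert_iff, Set.mem_singleton_iff]
    omega
  refine ⟨hgaps, ?_, ?_, ?_⟩
  · rw [hgaps]
    have : Set.Icc 1 (r - 1) ∪ ({2 * r - 6, 2 * r - 5, 2 * r - 2, 2 * r - 1} : Set ℕ) =
        ↑(Finset.Icc 1 (r-1) ∪ {2*r-6, 2*r-5, 2*r-2, 2*r-1} : Finset ℕ) := by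
      ext n
      simp [Set.mem_Icc, Finset.mem_Icc]
    rw [this, Set.ncard_coe_finset]
    rw [Finset.card_union_of_disjoint]
    · rw [Nat.card_Icc]
      have h4 : ({2*r-6, 2*r-5, 2*r-2, 2*r-1} : Finset ℕ).card = 4 := by
        rw [Finset.card_insert_of_notMem (by simp; omega),
          Finset.card_insert_of_notMem (by simp; omega),
          Finset.card_insert_of_notMem (by simp; omega), Finset.card_singleton]
      omega
    · simp only [Finset.disjoint_left, Finset.mem_Icc, Finset.mem_insert,
        Finset.mem_singleton]
      intro a ha
      omega
  · rw [hchar, hGmem]; omega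
  · intro n hn
    exact hup n (by omega)
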